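/- Let f(n, k) denote the number of words in [k]^n avoiding the pattern 111. Then for every integer k ≥ 1, the identity (∑_{n ≥ 0} f(n, k)·x^n) · (1 - (k-1)·x - (k-1)·x²) = 1 + x + x² holds as an identity of formal power series over ℚ. -/

import Mathlib

open PowerSeries

/-- The `i`-th letter (1-based value in `{1,…,k}`) of a word `w ∈ [k]^n`,
with value `0` outside the word. -/
def letter {n k : ℕ} (w : Fin n → Fin k) (i : ℕ) : ℕ :=
  if h : i < n then (w ⟨i, h⟩ : ℕ) + 1 else 0

/-- `w` avoids the pattern 111: no three equal consecutive letters. -/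
def Avoids111 {n k : ℕ} (w : Fin n → Fin k) : Prop :=
  ∀ i : ℕ, i + 2 < n →
    ¬ (letter w i = letter w (i + 1) ∧ letter w (i + 1) = letter w (i + 2))

/-- The number of words in `[k]^n` avoiding 111. -/
noncomputable def f (n k : ℕ) : ℕ := Nat.card {w : Fin n → Fin k // Avoids111 w}

-- decidability
instance {n k : ℕ} (w : Fin n → Fin k) : Decidable (Avoids111 w) :=
  decidable_of_iff (∀ i < n, i + 2 < n →
      ¬ (letter w i = letter w (i + 1) ∧ letter w (i + 1) = letter w (i + 2)))
    ⟨fun h i hi => h i (by omega) hi, fun h i _ hi => h i hi⟩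

lemma letter_cons_zero {n k : ℕ} (a : Fin k) (u : Fin n → Fin k) :
    letter (Fin.cons a u) 0 = (a : ℕ) + 1 := by
  simp [letter]

lemma letter_cons_succ {n k : ℕ} (a : Fin k) (u : Fin n → Fin k) (i : ℕ) :
    letter (Fin.cons a u) (i + 1) = letter u i := by
  unfold letter
  by_cases h : i < n
  · have h1 : i + 1 < n + 1 := by omega
    rw [dif_pos h1, dif_pos h]
    have : (⟨i + 1, h1⟩ : Fin (n + 1)) = Fin.succ ⟨i, h⟩ := rfl
    rw [this, Fin.cons_succ]
  · rw [dif_neg (by omega), dif_neg h]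

lemma avoids_cons {n k : ℕ} (a : Fin k) (u : Fin n → Fin k) :
    Avoids111 (Fin.cons a u) ↔
      Avoids111 u ∧ (2 ≤ n → ¬((a : ℕ) + 1 = letter u 0 ∧ letter u 0 = letter u 1)) := by
  constructor
  · intro h
    constructor
    · intro i hi
      have := h (i + 1) (by omega)
      simpa [letter_cons_succ] using this
    · intro hn
      have := h 0 (by omega)
      simpa [letter_cons_zero, letter_cons_succ] using this
  · rintro ⟨h1, h2⟩ i hi
    cases i with
    | zero => simpa [letter_cons_zero, letter_cons_succ] using h2 (by omega)
    | succ j => simpa [letter_cons_succ] using h1 j (by omega)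

lemma letter_eq_iff {n k : ℕ} (u : Fin n → Fin k) (a : Fin k) (i : ℕ) (h : i < n) :
    (a : ℕ) + 1 = letter u i ↔ a = u ⟨i, h⟩ := by
  simp [letter, h, Fin.ext_iff, eq_comm]


lemma letter_tail {n k : ℕ} (w : Fin (n + 1) → Fin k) (i : ℕ) :
    letter (Fin.tail w) i = letter w (i + 1) := by
  conv_rhs => rw [← Fin.cons_self_tail w, letter_cons_succ]

lemma avoids_tail {n k : ℕ} {w : Fin (n + 1) → Fin k} (h : Avoids111 w) :
    Avoids111 (Fin.tail w) := by
  intro i hi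
  simpa [letter_tail] using h (i + 1) (by omega)

lemma fin_one_succ {n : ℕ} : (1 : Fin (n + 2)) = Fin.succ 0 := by
  ext
  simp

lemma cons_one {n k : ℕ} (a : Fin k) (u : Fin (n + 1) → Fin k) :
    (Fin.cons a u : Fin (n + 2) → Fin k) 1 = u 0 := by
  rw [fin_one_succ, Fin.cons_succ]

lemma tail_zero {n k : ℕ} (w : Fin (n + 2) → Fin k) : Fin.tail w 0 = w 1 := by
  rw [Fin.tail, fin_one_succ]

lemma tail_one {n k : ℕ} (w : Fin (n + 3) → Fin k) : Fin.tail w 1 = w 2 := by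
  show w (Fin.succ 1) = w 2
  congr 1

lemma letter_eq_letter {n k : ℕ} (w : Fin n → Fin k) (i j : ℕ) (hi : i < n) (hj : j < n) :
    letter w i = letter w j ↔ w ⟨i, hi⟩ = w ⟨j, hj⟩ := by
  simp [letter, hi, hj, Fin.ext_iff]

lemma not_three {n k : ℕ} {w : Fin (n + 3) → Fin k} (h : Avoids111 w)
    (h01 : w 0 = w 1) : w 1 ≠ w 2 := by
  intro h12
  apply h 0 (by omega)
  constructor
  · rw [letter_eq_letter w 0 1 (by omega) (by omega)]
    convert h01 <;> simp
  · rw [letter_eq_letter w 1 2 (by omega) (by omega)]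
    convert h12 <;> simp [Nat.mod_eq_of_lt (by omega : 2 < n + 3)]

/-- main structural equivalence -/
noncomputable def mainEquiv (n k : ℕ) :
    {w : Fin (n + 3) → Fin k // Avoids111 w} ≃
      ((Σ u : {u : Fin (n + 2) → Fin k // Avoids111 u}, {a : Fin k // a ≠ u.1 0}) ⊕
       (Σ v : {v : Fin (n + 1) → Fin k // Avoids111 v}, {a : Fin k // a ≠ v.1 0})) where
  toFun w :=
    if h : w.1 0 = w.1 1 then
      Sum.inr ⟨⟨Fin.tail (Fin.tail w.1), avoids_tail (avoids_tail w.2)⟩,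
        ⟨w.1 0, by
          show w.1 0 ≠ Fin.tail (Fin.tail w.1) 0
          rw [tail_zero, tail_one, h]
          exact not_three w.2 h⟩⟩
    else
      Sum.inl ⟨⟨Fin.tail w.1, avoids_tail w.2⟩,
        ⟨w.1 0, by show w.1 0 ≠ Fin.tail w.1 0; rw [tail_zero]; exact h⟩⟩
  invFun p :=
    match p with
    | Sum.inl ⟨⟨u, hu⟩, ⟨a, ha⟩⟩ =>
      ⟨Fin.cons a u, by
        rw [avoids_cons]
        refine ⟨hu, fun _ hc => ?_⟩
        rw [letter_eq_iff u a 0 (by omega)] at hc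
        exact ha hc.1⟩
    | Sum.inr ⟨⟨v, hv⟩, ⟨a, ha⟩⟩ =>
      ⟨Fin.cons a (Fin.cons a v), by
        rw [avoids_cons]
        constructor
        · rw [avoids_cons]
          refine ⟨hv, fun _ hc => ?_⟩
          rw [letter_eq_iff v a 0 (by omega)] at hc
          exact ha hc.1
        · intro _ hc
          have h1 : letter (Fin.cons a v) 0 = (a : ℕ) + 1 := letter_cons_zero a v
          have h2 : letter (Fin.cons a v) 1 = letter v 0 := letter_cons_succ a v 0
          rw [h1, h2, letter_eq_iff v a 0 (by omega)] at hc
          exact ha hc.2⟩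
  left_inv w := by
    by_cases h : w.1 0 = w.1 1
    · simp only [dif_pos h]
      apply Subtype.ext
      show Fin.cons (w.1 0) (Fin.cons (w.1 0) (Fin.tail (Fin.tail w.1))) = w.1
      funext i
      refine Fin.cases ?_ (fun j => ?_) i
      · rw [Fin.cons_zero]
      · rw [Fin.cons_succ]
        refine Fin.cases ?_ (fun j2 => ?_) j
        · rw [Fin.cons_zero, ← fin_one_succ]
          exact h
        · rw [Fin.cons_succ]
          rfl
    · simp only [dif_neg h]
      apply Subtype.ext
      show Fin.cons (w.1 0) (Fin.tail w.1) = w.1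
      exact Fin.cons_self_tail w.1
  right_inv p := by
    match p with
    | Sum.inl ⟨⟨u, hu⟩, ⟨a, ha⟩⟩ =>
      have hne : (Fin.cons a u : Fin (n + 3) → Fin k) 0 ≠ (Fin.cons a u : Fin (n + 3) → Fin k) 1 := by
        rw [Fin.cons_zero, cons_one]; exact ha
      simp only [dif_neg hne]
      have h1 : Fin.tail (Fin.cons a u : Fin (n + 3) → Fin k) = u :=
        by funext i; simp [Fin.tail]
      congr 1
    | Sum.inr ⟨⟨v, hv⟩, ⟨a, ha⟩⟩ =>
      have heq : (Fin.cons a (Fin.cons a v) : Fin (n + 3) → Fin k) 0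
          = (Fin.cons a (Fin.cons a v) : Fin (n + 3) → Fin k) 1 := by
        rw [Fin.cons_zero, cons_one, Fin.cons_zero]
      simp only [dif_pos heq]
      have h1 : Fin.tail (Fin.tail (Fin.cons a (Fin.cons a v) : Fin (n + 3) → Fin k)) = v := by
        rw [Fin.tail_cons, Fin.tail_cons]
      congr 1

lemma card_ne {k : ℕ} (b : Fin k) : Nat.card {a : Fin k // a ≠ b} = k - 1 := by
  rw [Nat.card_eq_fintype_card]
  have : Fintype.card {a : Fin k // a ≠ b}
      = Fintype.card (Fin k) - Fintype.card {a : Fin k // a = b} :=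
    Fintype.card_subtype_compl _
  rw [this, Fintype.card_subtype_eq, Fintype.card_fin]

lemma f_rec (n k : ℕ) : f (n + 3) k = (k - 1) * f (n + 2) k + (k - 1) * f (n + 1) k := by
  rw [f, Nat.card_congr (mainEquiv n k)]
  rw [Nat.card_eq_fintype_card, Fintype.card_sum, Fintype.card_sigma, Fintype.card_sigma]
  have c1 : ∀ u : {u : Fin (n + 2) → Fin k // Avoids111 u},
      Fintype.card {a : Fin k // a ≠ u.1 0} = k - 1 := fun u => by
    rw [← Nat.card_eq_fintype_card]; exact card_ne _
  have c2 : ∀ v : {v : Fin (n + 1) → Fin k // Avoids111 v},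
      Fintype.card {a : Fin k // a ≠ v.1 0} = k - 1 := fun v => by
    rw [← Nat.card_eq_fintype_card]; exact card_ne _
  simp only [c1, c2, Finset.sum_const, smul_eq_mul, Finset.card_univ]
  rw [f, f, Nat.card_eq_fintype_card, Nat.card_eq_fintype_card]
  ring

lemma f_small {n k : ℕ} (hn : n ≤ 2) : f n k = k ^ n := by
  have : ∀ w : Fin n → Fin k, Avoids111 w := fun w i hi => absurd hi (by omega)
  rw [f, Nat.card_congr (Equiv.subtypeUnivEquiv this), Nat.card_eq_fintype_card,
    Fintype.card_fun, Fintype.card_fin, Fintype.card_fin]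

theorem stmt13 (k : ℕ) (hk : 1 ≤ k) :
    (PowerSeries.mk fun n => (f n k : ℚ)) *
        (1 - C ((k : ℚ) - 1) * X - C ((k : ℚ) - 1) * X ^ 2) =
      1 + X + X ^ 2 := by
  have hcast : ((k - 1 : ℕ) : ℚ) = (k : ℚ) - 1 := by
    push_cast [Nat.cast_sub hk]; ring
  have hrec : ∀ n : ℕ, (f (n + 3) k : ℚ)
      = ((k : ℚ) - 1) * f (n + 2) k + ((k : ℚ) - 1) * f (n + 1) k := by
    intro n
    rw [f_rec n k, Nat.cast_add, Nat.cast_mul, Nat.cast_mul, hcast]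
  set F : PowerSeries ℚ := PowerSeries.mk fun n => (f n k : ℚ) with hF
  have e : F * (1 - C ((k : ℚ) - 1) * X - C ((k : ℚ) - 1) * X ^ 2)
      = F - C ((k : ℚ) - 1) * (F * X) - C ((k : ℚ) - 1) * (F * X ^ 2) := by ring
  rw [e]
  ext n
  rw [map_sub, map_sub, map_add, map_add, coeff_C_mul, coeff_C_mul,
    coeff_mul_X_pow', coeff_one, coeff_X, coeff_X_pow]
  match n with
  | 0 =>
    have h0 : (coeff 0) (F * X) = 0 := by
      rw [coeff_zero_eq_constantCoeff, map_mul, constantCoeff_X, mul_zero]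
    rw [h0]
    simp [hF, coeff_mk, f_small]
  | 1 =>
    rw [coeff_succ_mul_X]
    have h1 : (f 1 k : ℚ) = k := by rw [f_small (by omega)]; push_cast; ring
    have h2 : (f 0 k : ℚ) = 1 := by rw [f_small (by omega)]; push_cast; ring
    simp [hF, coeff_mk, h1, h2]
  | 2 =>
    rw [coeff_succ_mul_X]
    have h1 : (f 1 k : ℚ) = k := by rw [f_small (by omega)]; push_cast; ring
    have h2 : (f 2 k : ℚ) = (k : ℚ) ^ 2 := by rw [f_small (by omega)]; push_cast; ring
    have h0 : (f 0 k : ℚ) = 1 := by rw [f_small (by omega)]; push_cast; ring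
    simp only [hF, coeff_mk, coeff_succ_mul_X, if_pos, if_neg]
    norm_num [h1, h2, h0]
    ring
  | (m + 3) =>
    rw [coeff_succ_mul_X]
    have hle : 2 ≤ m + 3 := by omega
    simp only [hF, coeff_mk, if_pos hle, if_neg (by omega : ¬ m + 3 = 0),
      if_neg (by omega : ¬ m + 3 = 1), if_neg (by omega : ¬ m + 3 = 2)]
    have : m + 3 - 2 = m + 1 := by omega
    rw [this]
    have := hrec m
    have h22 : (coeff (m + 2)) F = (f (m + 2) k : ℚ) := by simp [hF]
    linarith [hrec m]
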